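/- For every n ≥ 1, the number of partitions λ of n whose Durfee square size does not occur as a part of λ equals the number of partitions μ of n for which there exists d ≥ 1 with μ_d = μ_{d+1} = d (i.e., the d-th and (d+1)-st largest parts of μ both equal d). -/

import Mathlib

open YoungDiagram

/-- The `d`-th largest part of a partition (1-indexed); `0` if the index is out of range. -/
def nthPart {n : ℕ} (p : n.Partition) (d : ℕ) : ℕ :=
  (p.parts.sort (· ≥ ·)).getD (d - 1) 0

/-- `f n d` is the number of partitions of `n` with fixed point `d`,
i.e. whose `d`-th largest part equals `d`. -/
noncomputable def f (n d : ℕ) : ℕ :=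
  Nat.card {p : n.Partition // nthPart p d = d}

/-- The size of the Durfee square of a partition: the greatest index `i` with `λ_i ≥ i`. -/
noncomputable def durfee {n : ℕ} (p : n.Partition) : ℕ :=
  sSup {i : ℕ | i ≤ nthPart p i}

/-- sorted list sorts to itself -/
lemma sort_coe_eq (l : List ℕ) (hl : l.SortedGE) :
    Multiset.sort (↑l : Multiset ℕ) (· ≥ ·) = l := by
  apply List.Perm.eq_of_pairwise' (Multiset.pairwise_sort _ _) hl.pairwise
  rw [← Multiset.coe_eq_coe, Multiset.sort_eq]

lemma rowLens_getD (μ : YoungDiagram) (i : ℕ) : μ.rowLens.getD i 0 = μ.rowLen i := by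
  rcases lt_or_ge i μ.rowLens.length with h | h
  · rw [List.getD_eq_getElem _ _ h, get_rowLens]
  · rw [List.getD_eq_default _ _ h]
    rw [length_rowLens] at h
    symm
    by_contra hne
    have : (i, 0) ∈ μ := by rw [mem_iff_lt_rowLen]; omega
    rw [mem_iff_lt_colLen] at this; omega

lemma rowLens_sum (μ : YoungDiagram) : μ.rowLens.sum = μ.card := by
  have hcells : μ.cells = (Finset.range (μ.colLen 0)).biUnion μ.row := by
    ext ⟨i, j⟩
    simp only [Finset.mem_biUnion, Finset.mem_range, mem_row_iff]
    constructor
    · intro h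
      rw [YoungDiagram.mem_cells] at h
      refine ⟨i, ?_, h, rfl⟩
      rw [← mem_iff_lt_colLen]
      exact μ.up_left_mem le_rfl (Nat.zero_le _) h
    · rintro ⟨a, _, h, rfl⟩; exact (YoungDiagram.mem_cells _).mpr h
  have hdisj : ∀ x ∈ Finset.range (μ.colLen 0), ∀ y ∈ Finset.range (μ.colLen 0), x ≠ y →
      Disjoint (μ.row x) (μ.row y) := by
    intro x _ y _ hxy
    rw [Finset.disjoint_left]
    intro c hc hc'
    rw [mem_row_iff] at hc hc'
    exact hxy (hc.2 ▸ hc'.2 ▸ rfl)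
  have := Finset.card_biUnion hdisj
  rw [YoungDiagram.card, hcells, this]
  rw [rowLens]
  have h2 : ∑ u ∈ Finset.range (μ.colLen 0), (μ.row u).card
      = ∑ u ∈ Finset.range (μ.colLen 0), μ.rowLen u :=
    Finset.sum_congr rfl fun i _ => μ.rowLen_eq_card.symm
  rw [h2, Finset.sum, Finset.range_val, Multiset.range, Multiset.map_coe, Multiset.sum_coe]

namespace PartConj

variable {n : ℕ}

/-- sorted parts list -/
def L (p : n.Partition) : List ℕ := p.parts.sort (· ≥ ·)

lemma L_sorted (p : n.Partition) : (L p).SortedGE := List.sortedGE_iff_pairwise.mpr (Multiset.pairwise_sort _ _)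

lemma L_pos (p : n.Partition) : ∀ x ∈ L p, 0 < x := fun x hx =>
  p.parts_pos ((Multiset.mem_sort _).mp hx)

lemma L_coe (p : n.Partition) : (↑(L p) : Multiset ℕ) = p.parts := Multiset.sort_eq _ _

/-- associated Young diagram -/
def diag (p : n.Partition) : YoungDiagram := ofRowLens (L p) (L_sorted p)

lemma rowLens_diag (p : n.Partition) : (diag p).rowLens = L p :=
  rowLens_ofRowLens_eq_self (L_pos p)

lemma card_diag (p : n.Partition) : (diag p).card = n := by
  rw [← rowLens_sum, rowLens_diag]
  have := p.parts_sum
  rw [← L_coe p, Multiset.sum_coe] at this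
  exact this

lemma nthPart_eq_rowLen (p : n.Partition) (d : ℕ) :
    nthPart p d = (diag p).rowLen (d - 1) := by
  rw [nthPart, ← rowLens_getD, rowLens_diag]; rfl

/-- the conjugate partition -/
def conj (p : n.Partition) : n.Partition where
  parts := ↑(diag p).transpose.rowLens
  parts_pos := fun {i} hi => pos_of_mem_rowLens _ i hi
  parts_sum := by
    rw [Multiset.sum_coe, rowLens_sum]
    have : (diag p).transpose.card = (diag p).card := by
      simp [YoungDiagram.transpose, YoungDiagram.card]
    rw [this, card_diag]

lemma ofRowLens_congr {w w' : List ℕ} (h : w = w') (hw : w.SortedGE)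
    (hw' : w'.SortedGE) : ofRowLens w hw = ofRowLens w' hw' := by subst h; rfl

lemma diag_conj (p : n.Partition) : diag (conj p) = (diag p).transpose := by
  have h2 : L (conj p) = (diag p).transpose.rowLens := sort_coe_eq _ (rowLens_sorted _)
  calc diag (conj p) = ofRowLens ((diag p).transpose.rowLens) (rowLens_sorted _) :=
        ofRowLens_congr h2 _ _
    _ = (diag p).transpose := ofRowLens_to_rowLens_eq_self

lemma conj_conj (p : n.Partition) : conj (conj p) = p := by
  ext1
  show (↑(diag (conj p)).transpose.rowLens : Multiset ℕ) = p.parts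
  rw [diag_conj, transpose_transpose, rowLens_diag, L_coe]

lemma nthPart_conj (p : n.Partition) (d : ℕ) :
    nthPart (conj p) d = (diag p).colLen (d - 1) := by
  rw [nthPart_eq_rowLen, diag_conj, rowLen_transpose]


lemma nthPart_def (p : n.Partition) (d : ℕ) : nthPart p d = (L p).getD (d - 1) 0 := rfl

lemma nthPart_mem (p : n.Partition) (d : ℕ) (h : nthPart p d ≠ 0) : nthPart p d ∈ p.parts := by
  rw [nthPart_def] at h ⊢
  rcases lt_or_ge (d-1) (L p).length with hl | hl
  · rw [List.getD_eq_getElem _ _ hl]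
    rw [← L_coe p, Multiset.mem_coe]
    exact List.getElem_mem hl
  · rw [List.getD_eq_default _ _ hl] at h; omega

lemma nthPart_le (p : n.Partition) (d : ℕ) : nthPart p d ≤ n := by
  rw [nthPart_def]
  rcases lt_or_ge (d-1) (L p).length with h | h
  · rw [List.getD_eq_getElem _ _ h]
    have hmem : (L p)[d-1] ∈ L p := List.getElem_mem h
    have := Multiset.le_sum_of_mem (Multiset.mem_coe.mpr hmem)
    rwa [L_coe, p.parts_sum] at this
  · rw [List.getD_eq_default _ _ h]; exact Nat.zero_le _

lemma bddS (p : n.Partition) : BddAbove {i : ℕ | i ≤ nthPart p i} :=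
  ⟨n, fun i hi => le_trans hi (nthPart_le p i)⟩

lemma neS (p : n.Partition) : Set.Nonempty {i : ℕ | i ≤ nthPart p i} :=
  ⟨0, Nat.zero_le _⟩

lemma durfee_le_nthPart (p : n.Partition) : durfee p ≤ nthPart p (durfee p) :=
  Nat.sSup_mem (neS p) (bddS p)

lemma nthPart_lt_of_gt_durfee (p : n.Partition) {i : ℕ} (hi : durfee p < i) :
    nthPart p i < i := by
  by_contra h
  exact absurd (le_csSup (bddS p) (le_of_not_gt h)) (not_le.mpr hi)

lemma mem_diag_iff (p : n.Partition) {i : ℕ} (hi : 1 ≤ i) :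
    i ≤ nthPart p i ↔ (i - 1, i - 1) ∈ diag p := by
  rw [nthPart_eq_rowLen, YoungDiagram.mem_iff_lt_rowLen]
  omega

lemma durfee_conj (p : n.Partition) : durfee (conj p) = durfee p := by
  unfold durfee
  congr 1
  ext i
  rcases Nat.eq_zero_or_pos i with rfl | hi
  · simp
  · rw [Set.mem_setOf_eq, Set.mem_setOf_eq, mem_diag_iff p hi, nthPart_conj,
      YoungDiagram.mem_iff_lt_colLen]
    omega

lemma durfee_pos (p : n.Partition) (hn : 1 ≤ n) : 1 ≤ durfee p := by
  apply le_csSup (bddS p)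
  show 1 ≤ nthPart p 1
  rw [nthPart_def]
  have hne : L p ≠ [] := by
    intro h
    have := p.parts_sum
    rw [← L_coe p, h] at this
    simp at this
    omega
  have hlen : 0 < (L p).length := List.length_pos_iff.mpr hne
  rw [show (1:ℕ) - 1 = 0 from rfl, List.getD_eq_getElem _ _ hlen]
  exact L_pos p _ (List.getElem_mem hlen)

lemma nthPart_anti (p : n.Partition) {d e : ℕ} (hd : 1 ≤ d) (hde : d ≤ e) :
    nthPart p e ≤ nthPart p d := by
  rw [nthPart_eq_rowLen, nthPart_eq_rowLen]
  exact (diag p).rowLen_anti _ _ (by omega)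

lemma durfee_eq {p : n.Partition} {d : ℕ} (hd : 1 ≤ d) (h1 : d ≤ nthPart p d)
    (h2 : nthPart p (d + 1) ≤ d) : durfee p = d := by
  apply le_antisymm
  · apply csSup_le (neS p)
    intro i hi
    by_contra hlt
    have : d + 1 ≤ i := by omega
    have := le_trans (Set.mem_setOf_eq ▸ hi) (nthPart_anti p (by omega) this)
    omega
  · exact le_csSup (bddS p) h1

lemma durfee_mem_parts_iff (p : n.Partition) (hn : 1 ≤ n) :
    durfee p ∈ p.parts ↔
      nthPart p (durfee p) = durfee p ∨ nthPart p (durfee p + 1) = durfee p := by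
  set D := durfee p with hD
  have hD1 : 1 ≤ D := durfee_pos p hn
  constructor
  · intro h
    rw [← L_coe p, Multiset.mem_coe] at h
    obtain ⟨i, hilen, hig⟩ := List.getElem_of_mem h
    have hip : nthPart p (i + 1) = D := by
      rw [nthPart_def, show i + 1 - 1 = i from rfl, List.getD_eq_getElem _ _ hilen, hig]
    rcases le_or_gt (i + 1) D with hle | hgt
    · left
      have h1 := nthPart_anti p (show 1 ≤ i + 1 by omega) hle
      have h2 := durfee_le_nthPart p
      rw [← hD] at h2
      omega
    · right
      have h1 := nthPart_anti p (show 1 ≤ D + 1 by omega) hgt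
      have h2 := nthPart_lt_of_gt_durfee p (show durfee p < D + 1 by omega)
      omega
  · intro h
    rcases h with h | h
    · exact h ▸ nthPart_mem p D (by omega)
    · exact h ▸ nthPart_mem p (D + 1) (by omega)

lemma key1 {p : n.Partition} (hn : 1 ≤ n) (h : durfee p ∉ p.parts) :
    nthPart (conj p) (durfee p) = durfee p ∧
      nthPart (conj p) (durfee p + 1) = durfee p := by
  obtain ⟨D, hD⟩ : ∃ D, durfee p = D := ⟨_, rfl⟩
  have hD1 : 1 ≤ D := hD ▸ durfee_pos p hn
  have hne := (not_iff_not.mpr (durfee_mem_parts_iff p hn)).mp h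
  rw [hD] at hne
  push_neg at hne
  obtain ⟨hne1, hne2⟩ := hne
  have hge : D ≤ nthPart p D := by have := durfee_le_nthPart p; rwa [hD] at this
  have hlt : nthPart p (D + 1) < D + 1 := by
    have := nthPart_lt_of_gt_durfee p (i := D + 1) (by omega)
    exact this
  rw [hD]
  rw [nthPart_eq_rowLen] at hge hlt hne1 hne2
  rw [Nat.add_sub_cancel] at hlt hne2
  have c1 : D - 1 < (diag p).colLen (D - 1) := by
    rw [← YoungDiagram.mem_iff_lt_colLen, YoungDiagram.mem_iff_lt_rowLen]; omega
  have c2 : ¬ D < (diag p).colLen (D - 1) := by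
    rw [← YoungDiagram.mem_iff_lt_colLen, YoungDiagram.mem_iff_lt_rowLen]; omega
  have c3 : D - 1 < (diag p).colLen D := by
    rw [← YoungDiagram.mem_iff_lt_colLen, YoungDiagram.mem_iff_lt_rowLen]; omega
  have c4 : ¬ D < (diag p).colLen D := by
    rw [← YoungDiagram.mem_iff_lt_colLen, YoungDiagram.mem_iff_lt_rowLen]; omega
  constructor
  · rw [nthPart_conj]; omega
  · rw [nthPart_conj, Nat.add_sub_cancel]; omega

lemma key2 {q : n.Partition} {d : ℕ} (hd : 1 ≤ d) (h1 : nthPart q d = d)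
    (h2 : nthPart q (d + 1) = d) : durfee (conj q) ∉ (conj q).parts := by
  have hn : 1 ≤ n := le_trans (show (1:ℕ) ≤ nthPart q d by omega) (nthPart_le q d)
  have hDq : durfee q = d := durfee_eq (d := d) hd h1.ge h2.le
  have hDc : durfee (conj q) = d := (durfee_conj q).trans hDq
  rw [durfee_mem_parts_iff (conj q) hn, hDc]
  push_neg
  rw [nthPart_conj, nthPart_conj, Nat.add_sub_cancel]
  rw [nthPart_eq_rowLen] at h1 h2
  rw [Nat.add_sub_cancel] at h2
  have c1 : d < (diag q).colLen (d - 1) := by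
    rw [← YoungDiagram.mem_iff_lt_colLen, YoungDiagram.mem_iff_lt_rowLen]; omega
  have c2 : ¬ d - 1 < (diag q).colLen d := by
    rw [← YoungDiagram.mem_iff_lt_colLen, YoungDiagram.mem_iff_lt_rowLen]; omega
  constructor <;> omega

end PartConj

open PartConj

/-- For `n ≥ 1`, the number of partitions of `n` whose Durfee square size does not
occur as a part equals the number of partitions `μ` of `n` for which there exists
`d ≥ 1` with `μ_d = μ_{d+1} = d`. -/
theorem durfee_not_part_eq_double_fixed (n : ℕ) (hn : 1 ≤ n) :
    Nat.card {l : n.Partition // durfee l ∉ l.parts} =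
      Nat.card {m : n.Partition // ∃ d, 1 ≤ d ∧ nthPart m d = d ∧ nthPart m (d + 1) = d} := by
  refine Nat.card_congr ⟨fun l => ⟨conj l.1, durfee l.1, durfee_pos l.1 hn,
      (key1 hn l.2).1, (key1 hn l.2).2⟩, fun m => ⟨conj m.1, ?_⟩,
      fun l => Subtype.ext (conj_conj l.1), fun m => Subtype.ext (conj_conj m.1)⟩
  obtain ⟨d, hd, h1, h2⟩ := m.2
  exact key2 hd h1 h2
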